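/- Let t ≥ 1. A code C of binary n×n arrays is a t-criss-cross deletion-correcting code if and only if it is a t-criss-cross insertion-correcting code. Equivalently: for all distinct X1, X2 ∈ C and all nonnegative t_r, t_c with t_r + t_c = t, D_{t_r,t_c}(X1) ∩ D_{t_r,t_c}(X2) = ∅ holds for all such (t_r,t_c) if and only if I_{t_r,t_c}(X1) ∩ I_{t_r,t_c}(X2) = ∅ holds for all such (t_r,t_c). -/

import Mathlib

namespace CrissCrossAux

/-- slope: a strict mono map on `Fin` grows at least linearly. -/
lemma slope_aux {m n : ℕ} {f : Fin m → Fin n} (hf : StrictMono f) :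
    ∀ (k c : ℕ) (hc : c + k < m), (f ⟨c, by omega⟩ : ℕ) + k ≤ (f ⟨c + k, hc⟩ : ℕ) := by
  intro k
  induction k with
  | zero => intro c hc; simp
  | succ k ih =>
    intro c hc
    have h1 := ih c (by omega)
    have h2 : f ⟨c + k, by omega⟩ < f ⟨c + (k+1), hc⟩ := by
      apply hf; rw [Fin.lt_def]; simp
    rw [Fin.lt_def] at h2
    omega

lemma slope {m n : ℕ} {f : Fin m → Fin n} (hf : StrictMono f) {c d : Fin m}
    (hcd : (c : ℕ) ≤ d) : (f c : ℕ) + (d : ℕ) ≤ (f d : ℕ) + (c : ℕ) := by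
  have h := slope_aux hf ((d : ℕ) - c) c (by omega)
  have e1 : (⟨(c : ℕ), by omega⟩ : Fin m) = c := rfl
  have e2 : (⟨(c : ℕ) + ((d : ℕ) - c), by omega⟩ : Fin m) = d := by
    apply Fin.ext; simp; omega
  rw [e1, e2] at h
  omega

lemma le_apply {m n : ℕ} {f : Fin m → Fin n} (hf : StrictMono f) (c : Fin m) :
    (c : ℕ) ≤ (f c : ℕ) := by
  have h := slope_aux hf (c : ℕ) 0 (by omega)
  have e2 : (⟨0 + (c : ℕ), by omega⟩ : Fin m) = c := by apply Fin.ext; simp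
  rw [e2] at h; omega

lemma bound {m n : ℕ} {f : Fin m → Fin n} (hf : StrictMono f) (c : Fin m) :
    (f c : ℕ) + m ≤ n + (c : ℕ) := by
  have hm : 0 < m := c.pos
  have hd : (c : ℕ) ≤ (⟨m - 1, by omega⟩ : Fin m) := by simp; omega
  have h := slope hf hd
  have := (f ⟨m - 1, by omega⟩).isLt
  simp at h
  omega

def cntLt {m n : ℕ} (f : Fin m → Fin n) (a : ℕ) : ℕ :=
  (Finset.univ.filter (fun c => (f c : ℕ) < a)).card

def cntLe {m n : ℕ} (f : Fin m → Fin n) (a : ℕ) : ℕ :=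
  (Finset.univ.filter (fun c => (f c : ℕ) ≤ a)).card

lemma card_val_lt (m q : ℕ) :
    (Finset.univ.filter (fun c : Fin m => (c : ℕ) < q)).card = min q m := by
  rw [← Finset.card_image_of_injective _ Fin.val_injective]
  have : (Finset.univ.filter (fun c : Fin m => (c : ℕ) < q)).image Fin.val
      = Finset.range (min q m) := by
    ext x
    simp only [Finset.mem_image, Finset.mem_filter, Finset.mem_univ, true_and,
      Finset.mem_range]
    constructor
    · rintro ⟨c, hc, rfl⟩; omega
    · intro hx; exact ⟨⟨x, by omega⟩, by simp; omega, rfl⟩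
  rw [this, Finset.card_range]

lemma card_val_le (m q : ℕ) :
    (Finset.univ.filter (fun c : Fin m => (c : ℕ) ≤ q)).card = min (q + 1) m := by
  have : (Finset.univ.filter (fun c : Fin m => (c : ℕ) ≤ q))
      = (Finset.univ.filter (fun c : Fin m => (c : ℕ) < q + 1)) := by
    ext c; simp
  rw [this, card_val_lt]

lemma cntLt_le {m n : ℕ} (f : Fin m → Fin n) (a : ℕ) : cntLt f a ≤ m := by
  have := Finset.card_filter_le (Finset.univ : Finset (Fin m)) (fun c => (f c : ℕ) < a)
  simpa [cntLt] using this

lemma cntLe_le {m n : ℕ} (f : Fin m → Fin n) (a : ℕ) : cntLe f a ≤ m := by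
  have := Finset.card_filter_le (Finset.univ : Finset (Fin m)) (fun c => (f c : ℕ) ≤ a)
  simpa [cntLe] using this

lemma cntLt_mono {m n : ℕ} (f : Fin m → Fin n) {a a' : ℕ} (h : a ≤ a') :
    cntLt f a ≤ cntLt f a' := by
  apply Finset.card_le_card
  intro c hc
  simp only [Finset.mem_filter, Finset.mem_univ, true_and] at *
  omega

lemma cntLe_mono {m n : ℕ} (f : Fin m → Fin n) {a a' : ℕ} (h : a ≤ a') :
    cntLe f a ≤ cntLe f a' := by
  apply Finset.card_le_card
  intro c hc
  simp only [Finset.mem_filter, Finset.mem_univ, true_and] at *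
  omega

lemma cntLt_apply {m n : ℕ} {f : Fin m → Fin n} (hf : StrictMono f) (c : Fin m) :
    cntLt f (f c) = (c : ℕ) := by
  unfold cntLt
  have : (Finset.univ.filter (fun d : Fin m => (f d : ℕ) < (f c : ℕ)))
      = (Finset.univ.filter (fun d : Fin m => (d : ℕ) < (c : ℕ))) := by
    ext d
    simp only [Finset.mem_filter, Finset.mem_univ, true_and]
    rw [← Fin.lt_def, ← Fin.lt_def, hf.lt_iff_lt]
  rw [this, card_val_lt]
  have := c.isLt; omega

lemma cntLe_apply {m n : ℕ} {f : Fin m → Fin n} (hf : StrictMono f) (c : Fin m) :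
    cntLe f (f c) = (c : ℕ) + 1 := by
  unfold cntLe
  have : (Finset.univ.filter (fun d : Fin m => (f d : ℕ) ≤ (f c : ℕ)))
      = (Finset.univ.filter (fun d : Fin m => (d : ℕ) ≤ (c : ℕ))) := by
    ext d
    simp only [Finset.mem_filter, Finset.mem_univ, true_and]
    rw [← Fin.le_def, ← Fin.le_def, hf.le_iff_le]
  rw [this, card_val_le]
  have := c.isLt; omega

/-- number of `f c ≤ a` witnesses: lower bound from a threshold. -/
lemma cntLt_ge {m n : ℕ} {f : Fin m → Fin n} (a q : ℕ) (hq : q ≤ m)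
    (h : ∀ c : Fin m, (c : ℕ) < q → (f c : ℕ) < a) : q ≤ cntLt f a := by
  have hsub : (Finset.univ.filter (fun c : Fin m => (c : ℕ) < q))
      ⊆ (Finset.univ.filter (fun c : Fin m => (f c : ℕ) < a)) := by
    intro c hc
    simp only [Finset.mem_filter, Finset.mem_univ, true_and] at *
    exact h c hc
  have := Finset.card_le_card hsub
  rw [card_val_lt] at this
  unfold cntLt
  omega

lemma cntLe_ge {m n : ℕ} {f : Fin m → Fin n} (a q : ℕ) (hq : q ≤ m)
    (h : ∀ c : Fin m, (c : ℕ) < q → (f c : ℕ) ≤ a) : q ≤ cntLe f a := by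
  have hsub : (Finset.univ.filter (fun c : Fin m => (c : ℕ) < q))
      ⊆ (Finset.univ.filter (fun c : Fin m => (f c : ℕ) ≤ a)) := by
    intro c hc
    simp only [Finset.mem_filter, Finset.mem_univ, true_and] at *
    exact h c hc
  have := Finset.card_le_card hsub
  rw [card_val_lt] at this
  unfold cntLe
  omega

lemma cntLe_lt_of {m n : ℕ} {f : Fin m → Fin n} (hf : StrictMono f) (a q : ℕ)
    (hq : 1 ≤ q) (hqm : q - 1 < m)
    (h : (a : ℕ) < (f ⟨q - 1, hqm⟩ : ℕ)) : cntLe f a < q := by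
  have hsub : (Finset.univ.filter (fun c : Fin m => (f c : ℕ) ≤ a))
      ⊆ (Finset.univ.filter (fun c : Fin m => (c : ℕ) < q - 1)) := by
    intro c hc
    simp only [Finset.mem_filter, Finset.mem_univ, true_and] at *
    by_contra hcc
    have h2 : (((⟨q - 1, hqm⟩ : Fin m)) : ℕ) ≤ (c : ℕ) := by simp only [Fin.val_mk]; omega
    have := slope hf h2
    simp only [Fin.val_mk] at this
    omega
  have := Finset.card_le_card hsub
  rw [card_val_lt] at this
  unfold cntLe
  omega


def off2 {m n : ℕ} (f2 : Fin m → Fin n) (p : ℕ) : ℕ :=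
  if h : p < m then (f2 ⟨p, h⟩ : ℕ) - p else n - m

def off1 {m n : ℕ} (f1 : Fin m → Fin n) (q : ℕ) : ℕ :=
  if h : q - 1 < m ∧ 1 ≤ q then (f1 ⟨q - 1, h.1⟩ : ℕ) - (q - 1) else 0

lemma off2_le {m n : ℕ} {f2 : Fin m → Fin n} (hf2 : StrictMono f2) (p : ℕ) :
    off2 f2 p ≤ n - m := by
  unfold off2
  split
  · next h => have := bound hf2 ⟨p, h⟩; simp at this; omega
  · omega

lemma off1_le {m n : ℕ} {f1 : Fin m → Fin n} (hf1 : StrictMono f1) (q : ℕ) :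
    off1 f1 q ≤ n - m := by
  unfold off1
  split
  · next h => have := bound hf1 ⟨q - 1, h.1⟩; simp at this; omega
  · omega

lemma off2_mono {m n : ℕ} {f2 : Fin m → Fin n} (hf2 : StrictMono f2) {p p' : ℕ}
    (h : p ≤ p') (h' : p' ≤ m) : off2 f2 p ≤ off2 f2 p' := by
  unfold off2
  split
  · next hp =>
    split
    · next hp' =>
      have hle : ((⟨p, hp⟩ : Fin m) : ℕ) ≤ ((⟨p', hp'⟩ : Fin m) : ℕ) := by simp; omega
      have := slope hf2 hle
      simp at this ⊢
      omega
    · next hp' =>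
      have := bound hf2 ⟨p, hp⟩; simp at this; omega
  · next hp => have : p' = m := by omega
               subst this
               split
               · omega
               · omega

lemma off1_mono {m n : ℕ} {f1 : Fin m → Fin n} (hf1 : StrictMono f1) {q q' : ℕ}
    (h : q ≤ q') (h' : q' ≤ m) : off1 f1 q ≤ off1 f1 q' := by
  unfold off1
  split
  · next hq =>
    have hq' : q' - 1 < m ∧ 1 ≤ q' := ⟨by omega, by omega⟩
    rw [dif_pos hq']
    have hle : ((⟨q - 1, hq.1⟩ : Fin m) : ℕ) ≤ ((⟨q' - 1, hq'.1⟩ : Fin m) : ℕ) := by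
      simp; omega
    have := slope hf1 hle
    simp at this ⊢
    omega
  · omega

/-- The key 1D merge lemma. -/
lemma merge {m n T : ℕ} (hT : n - m ≤ T) {f1 f2 : Fin m → Fin n}
    (hf1 : StrictMono f1) (hf2 : StrictMono f2) :
    ∃ u1 u2 : Fin n → Fin (n + T), StrictMono u1 ∧ StrictMono u2 ∧
      (∀ c, u1 (f1 c) = u2 (f2 c)) ∧
      (∀ a a', u1 a = u2 a' → ∃ c, a = f1 c ∧ a' = f2 c) := by
  set U1 : Fin n → ℕ := fun a => (a : ℕ) + off2 f2 (cntLt f1 a) with hU1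
  set U2 : Fin n → ℕ := fun a => (a : ℕ) + off1 f1 (cntLe f2 a) with hU2
  have hU1mono : ∀ a b : Fin n, a < b → U1 a < U1 b := by
    intro a b hab
    rw [Fin.lt_def] at hab
    have h1 : cntLt f1 a ≤ cntLt f1 b := cntLt_mono f1 (by omega)
    have h2 : off2 f2 (cntLt f1 a) ≤ off2 f2 (cntLt f1 b) :=
      off2_mono hf2 h1 (cntLt_le f1 b)
    simp only [hU1]
    omega
  have hU2mono : ∀ a b : Fin n, a < b → U2 a < U2 b := by
    intro a b hab
    rw [Fin.lt_def] at hab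
    have h1 : cntLe f2 a ≤ cntLe f2 b := cntLe_mono f2 (by omega)
    have h2 : off1 f1 (cntLe f2 a) ≤ off1 f1 (cntLe f2 b) :=
      off1_mono hf1 h1 (cntLe_le f2 b)
    simp only [hU2]
    omega
  have hshared : ∀ c : Fin m, U1 (f1 c) = U2 (f2 c) := by
    intro c
    simp only [hU1, hU2]
    rw [cntLt_apply hf1, cntLe_apply hf2]
    have e1 : off2 f2 (c : ℕ) = (f2 c : ℕ) - (c : ℕ) := by
      unfold off2; rw [dif_pos c.isLt]
    have e2 : off1 f1 ((c : ℕ) + 1) = (f1 c : ℕ) - (c : ℕ) := by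
      unfold off1
      have hc : (c : ℕ) + 1 - 1 < m ∧ 1 ≤ (c : ℕ) + 1 := ⟨by simpa using c.isLt, by omega⟩
      rw [dif_pos hc]
      simp
    rw [e1, e2]
    have := le_apply hf1 c
    have := le_apply hf2 c
    omega
  have hinter : ∀ a a' : Fin n, U1 a = U2 a' → ∃ c, a = f1 c ∧ a' = f2 c := by
    intro a a' heq
    by_cases hsh : ∃ c, a' = f2 c
    · obtain ⟨c, rfl⟩ := hsh
      refine ⟨c, ?_, rfl⟩
      have h1 : U1 a = U1 (f1 c) := heq.trans (hshared c).symm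
      rcases lt_trichotomy a (f1 c) with h | h | h
      · exact absurd (hU1mono _ _ h) (by omega)
      · exact h
      · exact absurd (hU1mono _ _ h) (by omega)
    · exfalso
      set q := cntLe f2 a' with hq
      have hqm : q ≤ m := cntLe_le f2 a'
      by_cases hq0 : q = 0
      · -- a' below all of f2 (or m = 0)
        have hoff1 : off1 f1 q = 0 := by unfold off1; rw [dif_neg]; omega
        have hU2a : U2 a' = (a' : ℕ) := by simp only [hU2]; rw [← hq, hoff1]; omega
        by_cases hm : m = 0
        · have hoff2 : off2 f2 (cntLt f1 a) = n - m := by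
            unfold off2; rw [dif_neg]; omega
          have := a.isLt
          have := a'.isLt
          simp only [hU1] at heq
          rw [hU2a, hoff2] at heq
          omega
        · have hm' : 0 < m := by omega
          have ha' : (a' : ℕ) < (f2 ⟨0, hm'⟩ : ℕ) := by
            by_contra hc
            have : 1 ≤ cntLe f2 a' := by
              apply cntLe_ge a' 1 (by omega)
              intro c hc1
              have : c = ⟨0, hm'⟩ := by apply Fin.ext; simp; omega
              rw [this]; omega
            omega
          have hoffge : off2 f2 0 ≤ off2 f2 (cntLt f1 a) :=
            off2_mono hf2 (by omega) (cntLt_le f1 a)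
          have hoff20 : off2 f2 0 = (f2 ⟨0, hm'⟩ : ℕ) := by
            unfold off2; rw [dif_pos hm']; simp
          simp only [hU1] at heq
          rw [hU2a] at heq
          omega
      · -- q ≥ 1
        have hq1 : 1 ≤ q := by omega
        have hqm1 : q - 1 < m := by omega
        set e2 := (f2 ⟨q - 1, hqm1⟩ : ℕ) with he2
        have he2le : e2 ≤ (a' : ℕ) := by
          by_contra hc
          have := cntLe_lt_of hf2 a' q hq1 hqm1 (by omega)
          omega
        have he2ne : e2 ≠ (a' : ℕ) := by
          intro hc
          exact hsh ⟨⟨q - 1, hqm1⟩, by apply Fin.ext; omega⟩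
        have he2lt : e2 < (a' : ℕ) := by omega
        -- a > f1 ⟨q-1⟩
        have hfa : (f1 ⟨q - 1, hqm1⟩ : ℕ) < (a : ℕ) := by
          have h1 : U2 (f2 ⟨q - 1, hqm1⟩) < U2 a' := by
            apply hU2mono; rw [Fin.lt_def]; omega
          have h2 : U1 (f1 ⟨q - 1, hqm1⟩) < U1 a := by
            rw [hshared ⟨q - 1, hqm1⟩]; omega
          rcases lt_trichotomy (a : ℕ) ((f1 ⟨q - 1, hqm1⟩ : ℕ)) with h | h | h
          · exact absurd (hU1mono a (f1 ⟨q - 1, hqm1⟩) (Fin.lt_def.mpr h)) (by omega)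
          · exfalso
            have ha2 : a = f1 ⟨q - 1, hqm1⟩ := Fin.ext h
            rw [ha2] at h2
            omega
          · exact h
        -- p ≥ q
        have hpge : q ≤ cntLt f1 a := by
          apply cntLt_ge a q hqm
          intro c hc
          have hcle : ((c : Fin m) : ℕ) ≤ ((⟨q - 1, hqm1⟩ : Fin m) : ℕ) := by simp; omega
          have := slope hf1 hcle
          simp at this
          omega
        have hoff1q : off1 f1 q = (f1 ⟨q - 1, hqm1⟩ : ℕ) - (q - 1) := by
          unfold off1; rw [dif_pos ⟨hqm1, hq1⟩]
        have hle1 := le_apply hf1 ⟨q - 1, hqm1⟩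
        simp only [Fin.val_mk] at hle1
        by_cases hqem : q = m
        · -- p = m
          have hpm : cntLt f1 a = m := le_antisymm (cntLt_le f1 a) (by omega)
          have hoff2 : off2 f2 (cntLt f1 a) = n - m := by
            unfold off2; rw [hpm, dif_neg]; omega
          have := a'.isLt
          simp only [hU1, hU2] at heq
          rw [hoff2, ← hq, hoff1q] at heq
          omega
        · -- q < m
          have hqltm : q < m := by omega
          have ha'lt : (a' : ℕ) < (f2 ⟨q, hqltm⟩ : ℕ) := by
            by_contra hc
            have : q + 1 ≤ cntLe f2 a' := by
              apply cntLe_ge a' (q + 1) (by omega)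
              intro c hc1
              have hcle : ((c : Fin m) : ℕ) ≤ ((⟨q, hqltm⟩ : Fin m) : ℕ) := by simp; omega
              have := slope hf2 hcle
              simp at this
              omega
            omega
          have hoffge : off2 f2 q ≤ off2 f2 (cntLt f1 a) :=
            off2_mono hf2 hpge (cntLt_le f1 a)
          have hoff2q : off2 f2 q = (f2 ⟨q, hqltm⟩ : ℕ) - q := by
            unfold off2; rw [dif_pos hqltm]
          have hle2 := le_apply hf2 ⟨q, hqltm⟩
          simp only [Fin.val_mk] at hle2
          simp only [hU1, hU2] at heq
          rw [← hq, hoff1q] at heq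
          omega
  -- package
  have hbd : ∀ a : Fin n, U1 a < n + T ∧ U2 a < n + T := by
    intro a
    have h1 := off2_le hf2 (cntLt f1 a)
    have h2 := off1_le hf1 (cntLe f2 a)
    have := a.isLt
    constructor <;> simp only [hU1, hU2] <;> omega
  refine ⟨fun a => ⟨U1 a, (hbd a).1⟩, fun a => ⟨U2 a, (hbd a).2⟩, ?_, ?_, ?_, ?_⟩
  · intro a b hab; rw [Fin.lt_def]; exact hU1mono a b hab
  · intro a b hab; rw [Fin.lt_def]; exact hU2mono a b hab
  · intro c; apply Fin.ext; simp only [Fin.val_mk]; exact hshared c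
  · intro a a' h
    apply hinter
    have := congrArg Fin.val h
    simpa using this


/-- Two strict-mono embeddings into a common range have a large common sub-embedding. -/
lemma intersect {n N T : ℕ} (hT : N ≤ n + T) {w1 w2 : Fin n → Fin N}
    (h1 : StrictMono w1) (h2 : StrictMono w2) :
    ∃ e1 e2 : Fin (n - T) → Fin n, StrictMono e1 ∧ StrictMono e2 ∧
      ∀ i, w1 (e1 i) = w2 (e2 i) := by
  classical
  set A : Finset (Fin N) := Finset.univ.image w1 with hA
  set B : Finset (Fin N) := Finset.univ.image w2 with hB
  have hcardA : A.card = n := by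
    rw [hA, Finset.card_image_of_injective _ h1.injective, Finset.card_univ, Fintype.card_fin]
  have hcardB : B.card = n := by
    rw [hB, Finset.card_image_of_injective _ h2.injective, Finset.card_univ, Fintype.card_fin]
  have hunion : (A ∪ B).card ≤ N := by
    have := Finset.card_le_card (Finset.subset_univ (A ∪ B))
    simpa using this
  have hinter : n - T ≤ (A ∩ B).card := by
    have := Finset.card_union_add_card_inter A B
    omega
  obtain ⟨S, hS, hScard⟩ := Finset.exists_subset_card_eq hinter
  set e : Fin (n - T) → Fin N := ⇑(S.orderEmbOfFin hScard) with he
  have hemono : StrictMono e := (S.orderEmbOfFin hScard).strictMono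
  have heS : ∀ i, e i ∈ S := fun i => S.orderEmbOfFin_mem hScard i
  have hw1 : ∀ i : Fin (n - T), ∃ a, w1 a = e i := by
    intro i
    have : e i ∈ A := (Finset.mem_inter.mp (hS (heS i))).1
    rw [hA] at this
    obtain ⟨a, _, ha⟩ := Finset.mem_image.mp this
    exact ⟨a, ha⟩
  have hw2 : ∀ i : Fin (n - T), ∃ a, w2 a = e i := by
    intro i
    have : e i ∈ B := (Finset.mem_inter.mp (hS (heS i))).2
    rw [hB] at this
    obtain ⟨a, _, ha⟩ := Finset.mem_image.mp this
    exact ⟨a, ha⟩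
  refine ⟨fun i => (hw1 i).choose, fun i => (hw2 i).choose, ?_, ?_, ?_⟩
  · intro i j hij
    have hi := (hw1 i).choose_spec
    have hj := (hw1 j).choose_spec
    rw [← h1.lt_iff_lt, hi, hj]
    exact hemono hij
  · intro i j hij
    have hi := (hw2 i).choose_spec
    have hj := (hw2 j).choose_spec
    rw [← h2.lt_iff_lt, hi, hj]
    exact hemono hij
  · intro i
    rw [(hw1 i).choose_spec, (hw2 i).choose_spec]

end CrissCrossAux

/-- `E` is obtained from `X` by deleting rows and columns (keeping relative order). -/
def IsSubArray {r1 c1 r2 c2 : ℕ} (E : Matrix (Fin r1) (Fin c1) Bool)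
    (X : Matrix (Fin r2) (Fin c2) Bool) : Prop :=
  ∃ f : Fin r1 → Fin r2, ∃ g : Fin c1 → Fin c2,
    StrictMono f ∧ StrictMono g ∧ ∀ i j, E i j = X (f i) (g j)

open CrissCrossAux

/-- A code `C` of binary `n × n` arrays is a `t`-criss-cross deletion-correcting
code iff it is a `t`-criss-cross insertion-correcting code. -/
theorem crissCross_indel_equivalence (n t : ℕ) (ht : 1 ≤ t)
    (C : Set (Matrix (Fin n) (Fin n) Bool)) :
    (∀ tr tc : ℕ, tr + tc = t → ∀ X1 ∈ C, ∀ X2 ∈ C, X1 ≠ X2 →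
      ∀ E : Matrix (Fin (n - tr)) (Fin (n - tc)) Bool,
        ¬(IsSubArray E X1 ∧ IsSubArray E X2)) ↔
    (∀ tr tc : ℕ, tr + tc = t → ∀ X1 ∈ C, ∀ X2 ∈ C, X1 ≠ X2 →
      ∀ F : Matrix (Fin (n + tr)) (Fin (n + tc)) Bool,
        ¬(IsSubArray X1 F ∧ IsSubArray X2 F)) := by
  classical
  constructor
  · -- deletion-correcting → insertion-correcting
    intro hdel tr tc htt X1 hX1 X2 hX2 hne F hF
    obtain ⟨⟨w1, x1, hw1, hx1, hFX1⟩, ⟨w2, x2, hw2, hx2, hFX2⟩⟩ := hF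
    obtain ⟨e1, e2, he1, he2, hee⟩ := intersect (n := n) (N := n + tr) (T := tr) le_rfl hw1 hw2
    obtain ⟨k1, k2, hk1, hk2, hkk⟩ := intersect (n := n) (N := n + tc) (T := tc) le_rfl hx1 hx2
    refine hdel tr tc htt X1 hX1 X2 hX2 hne (fun i j => X1 (e1 i) (k1 j)) ⟨?_, ?_⟩
    · exact ⟨e1, k1, he1, hk1, fun i j => rfl⟩
    · refine ⟨e2, k2, he2, hk2, fun i j => ?_⟩
      show X1 (e1 i) (k1 j) = X2 (e2 i) (k2 j)
      rw [hFX1, hFX2, hee i, hkk j]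
  · -- insertion-correcting → deletion-correcting
    intro hins tr tc htt X1 hX1 X2 hX2 hne E hE
    obtain ⟨⟨f1, g1, hf1, hg1, hE1⟩, ⟨f2, g2, hf2, hg2, hE2⟩⟩ := hE
    obtain ⟨u1, u2, hu1, hu2, hushared, huint⟩ :=
      merge (m := n - tr) (n := n) (T := tr) (by omega) hf1 hf2
    obtain ⟨v1, v2, hv1, hv2, hvshared, hvint⟩ :=
      merge (m := n - tc) (n := n) (T := tc) (by omega) hg1 hg2
    set F : Matrix (Fin (n + tr)) (Fin (n + tc)) Bool := fun i j =>
      if h : (∃ a, u1 a = i) ∧ (∃ b, v1 b = j) then X1 h.1.choose h.2.choose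
      else if h' : (∃ a, u2 a = i) ∧ (∃ b, v2 b = j) then X2 h'.1.choose h'.2.choose
      else false with hFdef
    refine hins tr tc htt X1 hX1 X2 hX2 hne F ⟨?_, ?_⟩
    · refine ⟨u1, v1, hu1, hv1, fun a b => ?_⟩
      have hab : (∃ a', u1 a' = u1 a) ∧ (∃ b', v1 b' = v1 b) := ⟨⟨a, rfl⟩, ⟨b, rfl⟩⟩
      show X1 a b = F (u1 a) (v1 b)
      rw [hFdef]
      simp only
      rw [dif_pos hab]
      have h1 : hab.1.choose = a := hu1.injective hab.1.choose_spec
      have h2 : hab.2.choose = b := hv1.injective hab.2.choose_spec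
      rw [h1, h2]
    · refine ⟨u2, v2, hu2, hv2, fun a b => ?_⟩
      show X2 a b = F (u2 a) (v2 b)
      rw [hFdef]
      simp only
      by_cases h : (∃ a', u1 a' = u2 a) ∧ (∃ b', v1 b' = v2 b)
      · rw [dif_pos h]
        obtain ⟨c, hc1, hc2⟩ := huint h.1.choose a h.1.choose_spec
        obtain ⟨d, hd1, hd2⟩ := hvint h.2.choose b h.2.choose_spec
        rw [hc1, hd1, ← hE1, hE2, ← hc2, ← hd2]
      · rw [dif_neg h]
        have hab : (∃ a', u2 a' = u2 a) ∧ (∃ b', v2 b' = v2 b) := ⟨⟨a, rfl⟩, ⟨b, rfl⟩⟩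
        rw [dif_pos hab]
        have h1 : hab.1.choose = a := hu2.injective hab.1.choose_spec
        have h2 : hab.2.choose = b := hv2.injective hab.2.choose_spec
        rw [h1, h2]
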